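/- Let X = (X₁,…,Xₙ) be a random string of n bits, and let Y be obtained from X by flipping each bit independently with probability p, 0 < p < 1/2. Then I(Y) ≤ (1−2p)²·I(X), where I(Z) = n − H(Z) and H is Shannon entropy in bits. -/

import Mathlib

open Finset

/-- Shannon entropy (in bits) of a probability mass function on a finite type. -/
noncomputable def shannonEnt {α : Type*} [Fintype α] (μ : α → ℝ) : ℝ :=
  ∑ x : α, -(μ x * Real.logb 2 (μ x))

/-- The distribution of the `n`-bit string obtained by flipping each bit of a string
distributed according to `μ` independently with probability `p`. -/
noncomputable def flipDist {n : ℕ} (p : ℝ) (μ : (Fin n → Bool) → ℝ) :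
    (Fin n → Bool) → ℝ :=
  fun y => ∑ x : Fin n → Bool, μ x * ∏ i : Fin n, (if y i = x i then 1 - p else p)

section Aux
open Real

noncomputable def phiF (s : ℝ) : ℝ := Real.log (1+s) - Real.log (1-s)

lemma phiF_hasDeriv {s : ℝ} (h1 : (1:ℝ)+s ≠ 0) (h2 : (1:ℝ)-s ≠ 0) :
    HasDerivAt phiF (1/(1+s) + 1/(1-s)) s := by
  have ha : HasDerivAt (fun t : ℝ => Real.log (1+t)) (1/(1+s)) s := by
    have := ((hasDerivAt_id s).const_add (1:ℝ)).log h1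
    simpa using this
  have hb : HasDerivAt (fun t : ℝ => Real.log (1-t)) (-(1/(1-s))) s := by
    have := ((hasDerivAt_id s).const_sub (1:ℝ)).log h2
    simpa [neg_div] using this
  exact (ha.sub hb).congr_deriv (by ring)

lemma phiF_contract {l s : ℝ} (hl0 : 0 ≤ l) (hl1 : l ≤ 1) (hs0 : 0 ≤ s) (hs1 : s < 1) :
    phiF (l*s) ≤ l * phiF s := by
  -- psi t = l * phiF t - phiF (l*t), monotone on [0, s]
  set psi : ℝ → ℝ := fun t => l * phiF t - phiF (l*t) with hpsi
  have hmono : MonotoneOn psi (Set.Icc 0 s) := by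
    have hderiv : ∀ t ∈ Set.Icc (0:ℝ) s, HasDerivAt psi
        (l * (1/(1+t) + 1/(1-t)) - l * (1/(1+l*t) + 1/(1-l*t))) t := by
      intro t ht
      obtain ⟨ht0, hts⟩ := ht
      have h1 : (0:ℝ) < 1 + t := by linarith
      have h2 : (0:ℝ) < 1 - t := by nlinarith
      have hlt0 : 0 ≤ l*t := mul_nonneg hl0 ht0
      have hlt1 : l*t ≤ t := by nlinarith
      have h3 : (0:ℝ) < 1 + l*t := by linarith
      have h4 : (0:ℝ) < 1 - l*t := by linarith
      have hA := (phiF_hasDeriv h1.ne' h2.ne').const_mul l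
      have hB := (phiF_hasDeriv h3.ne' h4.ne').comp t ((hasDerivAt_id t).const_mul l)
      exact (hA.sub hB).congr_deriv (by ring)
    apply monotoneOn_of_hasDerivWithinAt_nonneg (convex_Icc 0 s)
      (fun t ht => (hderiv t ht).continuousAt.continuousWithinAt)
      (fun t ht => ((hderiv t (interior_subset ht)).hasDerivWithinAt))
    intro t ht
    rw [interior_Icc] at ht
    obtain ⟨ht0, hts⟩ := ht
    have h1 : (0:ℝ) < 1 + t := by linarith
    have h2 : (0:ℝ) < 1 - t := by nlinarith
    have hlt0 : 0 ≤ l*t := mul_nonneg hl0 ht0.le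
    have hlt1 : l*t ≤ t := by nlinarith
    have h3 : (0:ℝ) < 1 + l*t := by linarith
    have h4 : (0:ℝ) < 1 - l*t := by linarith
    have key : 1/(1+l*t) + 1/(1-l*t) ≤ 1/(1+t) + 1/(1-t) := by
      rw [div_add_div _ _ h3.ne' h4.ne', div_add_div _ _ h1.ne' h2.ne']
      have e1 : (1-l*t) + (1+l*t) = 2 := by ring
      have e2 : (1-t) + (1+t) = 2 := by ring
      rw [div_le_div_iff₀ (by positivity) (by positivity)]
      nlinarith [mul_nonneg hlt0 (sub_nonneg.2 hlt1)]
    nlinarith [mul_nonneg hl0 (sub_nonneg.2 key)]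
  have h0 : psi 0 = 0 := by simp [hpsi, phiF]
  have := hmono (Set.left_mem_Icc.2 hs0) (Set.mem_Icc.2 ⟨hs0, le_refl s⟩) hs0
  rw [h0] at this
  simpa [hpsi, sub_nonneg] using this

noncomputable def EF (t : ℝ) : ℝ := (1/2+t) * Real.log (1/2+t) + (1/2-t) * Real.log (1/2-t)

lemma EF_hasDeriv {t : ℝ} (h1 : (1:ℝ)/2 + t ≠ 0) (h2 : (1:ℝ)/2 - t ≠ 0) :
    HasDerivAt EF (Real.log (1/2+t) - Real.log (1/2-t)) t := by
  have ha : HasDerivAt (fun u : ℝ => (1/2+u) * Real.log (1/2+u)) (Real.log (1/2+t) + 1) t := by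
    have := (Real.hasDerivAt_mul_log h1).comp t ((hasDerivAt_id t).const_add (1/2:ℝ))
    simpa [Function.comp_def] using this
  have hb : HasDerivAt (fun u : ℝ => (1/2-u) * Real.log (1/2-u)) (-(Real.log (1/2-t) + 1)) t := by
    have := (Real.hasDerivAt_mul_log h2).comp t ((hasDerivAt_id t).const_sub (1/2:ℝ))
    simpa [Function.comp_def] using this
  have := ha.add hb
  exact this.congr_deriv (by ring)

lemma EF_deriv_eq_phiF {t : ℝ} (h1 : (0:ℝ) < 1/2 + t) (h2 : (0:ℝ) < 1/2 - t) :
    Real.log (1/2+t) - Real.log (1/2-t) = phiF (2*t) := by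
  have e1 : (1:ℝ)/2 + t = (1+2*t)/2 := by ring
  have e2 : (1:ℝ)/2 - t = (1-2*t)/2 := by ring
  rw [phiF, e1, e2, Real.log_div (by linarith) two_ne_zero, Real.log_div (by linarith) two_ne_zero]
  ring

lemma EF_continuous : Continuous EF := by
  have h := Real.continuous_mul_log
  exact ((h.comp (continuous_const.add continuous_id)).add
    (h.comp (continuous_const.sub continuous_id)))

lemma GF_nonneg {l t : ℝ} (hl0 : 0 ≤ l) (hl1 : l ≤ 1) (ht0 : 0 ≤ t) (ht1 : t ≤ 1/2) :
    0 ≤ l^2 * (Real.log 2 + EF t) - (Real.log 2 + EF (l*t)) := by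
  set G : ℝ → ℝ := fun u => l^2 * (Real.log 2 + EF u) - (Real.log 2 + EF (l*u)) with hG
  have hmono : MonotoneOn G (Set.Icc 0 (1/2)) := by
    apply monotoneOn_of_deriv_nonneg (convex_Icc 0 (1/2))
    · apply Continuous.continuousOn
      exact ((continuous_const.mul (continuous_const.add EF_continuous)).sub
        (continuous_const.add (EF_continuous.comp (continuous_const.mul continuous_id))))
    · intro u hu
      rw [interior_Icc] at hu
      obtain ⟨hu0, hu1⟩ := hu
      have h1 : (0:ℝ) < 1/2 + u := by linarith
      have h2 : (0:ℝ) < 1/2 - u := by linarith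
      have hlu0 : 0 ≤ l*u := mul_nonneg hl0 hu0.le
      have hlu1 : l*u ≤ u := by nlinarith
      have h3 : (0:ℝ) < 1/2 + l*u := by linarith
      have h4 : (0:ℝ) < 1/2 - l*u := by linarith
      have hA := ((EF_hasDeriv h1.ne' h2.ne').const_add (Real.log 2)).const_mul (l^2)
      have hB := ((EF_hasDeriv h3.ne' h4.ne').comp u ((hasDerivAt_id u).const_mul l)).const_add
        (Real.log 2)
      have hd := hA.sub hB
      exact (hd.differentiableAt).differentiableWithinAt.congr
        (fun x _ => by simp [hG, Function.comp]) (by simp [hG, Function.comp])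
    · intro u hu
      rw [interior_Icc] at hu
      obtain ⟨hu0, hu1⟩ := hu
      have h1 : (0:ℝ) < 1/2 + u := by linarith
      have h2 : (0:ℝ) < 1/2 - u := by linarith
      have hlu0 : 0 ≤ l*u := mul_nonneg hl0 hu0.le
      have hlu1 : l*u ≤ u := by nlinarith
      have h3 : (0:ℝ) < 1/2 + l*u := by linarith
      have h4 : (0:ℝ) < 1/2 - l*u := by linarith
      have hA := ((EF_hasDeriv h1.ne' h2.ne').const_add (Real.log 2)).const_mul (l^2)
      have hB := ((EF_hasDeriv h3.ne' h4.ne').comp u ((hasDerivAt_id u).const_mul l)).const_add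
        (Real.log 2)
      have hd : HasDerivAt G
          (l^2 * (Real.log (1/2+u) - Real.log (1/2-u))
            - (Real.log (1/2+l*u) - Real.log (1/2-l*u)) * l) u := by
        exact (hA.sub hB).congr_deriv (by ring)
      rw [hd.deriv]
      rw [EF_deriv_eq_phiF h1 h2, EF_deriv_eq_phiF h3 h4]
      have hs0 : (0:ℝ) ≤ 2*u := by linarith
      have hs1 : 2*u < 1 := by linarith
      have hc : phiF (l*(2*u)) ≤ l * phiF (2*u) := phiF_contract hl0 hl1 hs0 hs1
      have he : 2*(l*u) = l*(2*u) := by ring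
      rw [he]
      nlinarith [mul_nonneg hl0 (sub_nonneg.2 hc)]
  have h0 : G 0 = 0 := by
    have : EF 0 = -Real.log 2 := by
      simp only [EF]
      rw [show (1:ℝ)/2 + 0 = 1/2 by ring, show (1:ℝ)/2 - 0 = 1/2 by ring]
      rw [show (1:ℝ)/2 = 2⁻¹ by norm_num, Real.log_inv]
      ring
    simp [hG, mul_zero, this]
  have := hmono (Set.left_mem_Icc.2 (by norm_num)) (Set.mem_Icc.2 ⟨ht0, ht1⟩) ht0
  rw [h0] at this
  simpa [hG] using this

noncomputable def El (a : ℝ) : ℝ := a * Real.log a + (1-a) * Real.log (1-a)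

lemma El_as_EF (a : ℝ) : El a = EF (a - 1/2) := by
  simp only [El, EF]; ring_nf

lemma binEnt_lemma {p a : ℝ} (hp0 : 0 < p) (hp1 : p < 1/2) (ha0 : 0 ≤ a) (ha1 : a ≤ 1) :
    Real.log 2 + El (p + (1-2*p)*a) ≤ (1-2*p)^2 * (Real.log 2 + El a) := by
  set l := 1 - 2*p with hl
  have hl0 : 0 ≤ l := by simp [hl]; linarith
  have hl1 : l ≤ 1 := by simp [hl]; linarith
  have key : ∀ t : ℝ, 0 ≤ t → t ≤ 1/2 →
      Real.log 2 + EF (l*t) ≤ l^2 * (Real.log 2 + EF t) := by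
    intro t h1 h2
    have := GF_nonneg hl0 hl1 h1 h2
    linarith
  rcases le_or_gt (1/2 : ℝ) a with hc | hc
  · have ht0 : 0 ≤ a - 1/2 := by linarith
    have ht1 : a - 1/2 ≤ 1/2 := by linarith
    have := key (a - 1/2) ht0 ht1
    rw [El_as_EF, El_as_EF]
    have e : p + (1-2*p)*a - 1/2 = l * (a - 1/2) := by rw [hl]; ring
    rw [e]
    exact this
  · -- use symmetry: El a = El (1-a)
    have ht0 : 0 ≤ (1-a) - 1/2 := by linarith
    have ht1 : (1-a) - 1/2 ≤ 1/2 := by linarith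
    have := key ((1-a) - 1/2) ht0 ht1
    rw [El_as_EF, El_as_EF]
    have e1 : p + (1-2*p)*a - 1/2 = -(l * ((1-a) - 1/2)) := by rw [hl]; ring
    have e2 : a - 1/2 = -((1-a) - 1/2) := by ring
    have hEFneg : ∀ u : ℝ, EF (-u) = EF u := by
      intro u; simp only [EF]; ring_nf
    rw [e1, e2, hEFneg, hEFneg]
    exact this



lemma sum_cons_decomp {n : ℕ} (f : (Fin (n+1) → Bool) → ℝ) :
    ∑ x : Fin (n+1) → Bool, f x = ∑ b : Bool, ∑ x : Fin n → Bool, f (Fin.cons b x) := by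
  rw [← Equiv.sum_comp (Fin.consEquiv (fun _ : Fin (n+1) => Bool)) f, Fintype.sum_prod_type]
  rfl

lemma flipDist_nonneg {n : ℕ} {p : ℝ} (hp0 : 0 ≤ p) (hp1 : p ≤ 1)
    {μ : (Fin n → Bool) → ℝ} (hμ0 : ∀ x, 0 ≤ μ x) (y : Fin n → Bool) :
    0 ≤ flipDist p μ y := by
  apply Finset.sum_nonneg
  intro x _
  apply mul_nonneg (hμ0 x)
  apply Finset.prod_nonneg
  intro i _
  split <;> linarith

lemma flipDist_sum {n : ℕ} {p : ℝ} {μ : (Fin n → Bool) → ℝ} (hμ1 : ∑ x, μ x = 1) :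
    ∑ y, flipDist p μ y = 1 := by
  have key : ∀ x : Fin n → Bool,
      ∑ y : Fin n → Bool, ∏ i, (if y i = x i then 1-p else p) = 1 := by
    intro x
    rw [← Fintype.piFinset_univ, ← Finset.prod_univ_sum (fun _ : Fin n => (univ : Finset Bool))
      (fun i b => if b = x i then 1-p else p)]
    apply Finset.prod_eq_one
    intro i _
    cases hx : x i <;> simp <;> ring
  unfold flipDist
  rw [Finset.sum_comm]
  calc ∑ x : Fin n → Bool, ∑ y : Fin n → Bool, μ x * ∏ i, (if y i = x i then 1-p else p)
      = ∑ x : Fin n → Bool, μ x * ∑ y : Fin n → Bool, ∏ i, (if y i = x i then 1-p else p) := by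
        apply Finset.sum_congr rfl; intro x _; rw [Finset.mul_sum]
    _ = ∑ x : Fin n → Bool, μ x := by
        apply Finset.sum_congr rfl; intro x _; rw [key x, mul_one]
    _ = 1 := hμ1

noncomputable def condD {n : ℕ} (σ : (Fin (n+1) → Bool) → ℝ) (b : Bool) :
    (Fin n → Bool) → ℝ :=
  if (∑ x, σ (Fin.cons b x)) = 0 then (fun x => if x = (fun _ => false) then 1 else 0)
  else fun x => σ (Fin.cons b x) / (∑ x, σ (Fin.cons b x))

lemma condD_nonneg {n : ℕ} {σ : (Fin (n+1) → Bool) → ℝ} (h0 : ∀ x, 0 ≤ σ x) (b : Bool)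
    (x : Fin n → Bool) : 0 ≤ condD σ b x := by
  unfold condD
  split
  · dsimp only; split <;> norm_num
  · dsimp only
    apply div_nonneg (h0 _)
    exact Finset.sum_nonneg (fun x _ => h0 _)

lemma condD_sum {n : ℕ} {σ : (Fin (n+1) → Bool) → ℝ} (b : Bool) :
    ∑ x, condD σ b x = 1 := by
  unfold condD
  split
  · rw [Finset.sum_ite_eq' univ]
    simp
  · rw [← Finset.sum_div]
    exact div_self (by assumption)

lemma condD_fact {n : ℕ} {σ : (Fin (n+1) → Bool) → ℝ} (h0 : ∀ x, 0 ≤ σ x) (b : Bool)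
    (x : Fin n → Bool) :
    σ (Fin.cons b x) = (∑ x, σ (Fin.cons b x)) * condD σ b x := by
  unfold condD
  split
  · rename_i h
    have : σ (Fin.cons b x) = 0 := by
      have := (Finset.sum_eq_zero_iff_of_nonneg (fun x _ => h0 (Fin.cons b x))).1 h
      exact this x (Finset.mem_univ x)
    rw [this, h, zero_mul]
  · rename_i h
    dsimp only
    rw [mul_div_cancel₀]
    exact h

lemma chain_rule {n : ℕ} (σ : (Fin (n+1) → Bool) → ℝ) (h0 : ∀ x, 0 ≤ σ x) :
    ∑ x, Real.negMulLog (σ x)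
      = (∑ b : Bool, Real.negMulLog (∑ x, σ (Fin.cons b x)))
        + ∑ b : Bool, (∑ x, σ (Fin.cons b x)) * ∑ x, Real.negMulLog (condD σ b x) := by
  rw [sum_cons_decomp (fun x => Real.negMulLog (σ x)), ← Finset.sum_add_distrib]
  apply Finset.sum_congr rfl
  intro b _
  calc ∑ x, Real.negMulLog (σ (Fin.cons b x))
      = ∑ x, (condD σ b x * Real.negMulLog (∑ x, σ (Fin.cons b x))
          + (∑ x, σ (Fin.cons b x)) * Real.negMulLog (condD σ b x)) := by
        apply Finset.sum_congr rfl
        intro x _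
        rw [condD_fact h0 b x, Real.negMulLog_mul]
    _ = _ := by
        rw [Finset.sum_add_distrib, ← Finset.sum_mul, condD_sum, one_mul, ← Finset.mul_sum]

lemma flip_cons {n : ℕ} (p : ℝ) (σ : (Fin (n+1) → Bool) → ℝ) (h0 : ∀ x, 0 ≤ σ x)
    (b : Bool) (y : Fin n → Bool) :
    flipDist p σ (Fin.cons b y)
      = ∑ b' : Bool, ((∑ x, σ (Fin.cons b' x)) * (if b = b' then 1-p else p))
          * flipDist p (condD σ b') y := by
  simp only [flipDist]
  rw [sum_cons_decomp]
  apply Finset.sum_congr rfl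
  intro b' _
  rw [Finset.mul_sum]
  apply Finset.sum_congr rfl
  intro x _
  have hprod : ∏ i : Fin (n+1),
        (if (Fin.cons b y : Fin (n+1) → Bool) i = (Fin.cons b' x : Fin (n+1) → Bool) i
          then 1-p else p)
      = (if b = b' then 1-p else p) * ∏ i : Fin n, (if y i = x i then 1-p else p) := by
    rw [Fin.prod_univ_succ]
    simp [Fin.cons_zero, Fin.cons_succ]
  rw [hprod, condD_fact h0 b' x]
  ring

lemma flip_marg {n : ℕ} (p : ℝ) (σ : (Fin (n+1) → Bool) → ℝ) (h0 : ∀ x, 0 ≤ σ x) (b : Bool) :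
    ∑ y, flipDist p σ (Fin.cons b y)
      = ∑ b' : Bool, (∑ x, σ (Fin.cons b' x)) * (if b = b' then 1-p else p) := by
  have : ∀ y, flipDist p σ (Fin.cons b y)
      = ∑ b' : Bool, ((∑ x, σ (Fin.cons b' x)) * (if b = b' then 1-p else p))
          * flipDist p (condD σ b') y := fun y => flip_cons p σ h0 b y
  rw [Finset.sum_congr rfl (fun y _ => this y), Finset.sum_comm]
  apply Finset.sum_congr rfl
  intro b' _
  rw [← Finset.mul_sum, flipDist_sum (condD_sum b'), mul_one]

lemma conc2 {M a b u v X : ℝ} (ha : 0 ≤ a) (hb : 0 ≤ b) (hM : M = a + b) (hM0 : 0 < M)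
    (hu : 0 ≤ u) (hv : 0 ≤ v) (hX : X = a*u + b*v) :
    a * Real.negMulLog u + b * Real.negMulLog v ≤ M * Real.negMulLog (X / M) := by
  have hsum : a/M + b/M = 1 := by
    rw [← add_div, ← hM, div_self hM0.ne']
  have h := Real.concaveOn_negMulLog.2 (Set.mem_Ici.2 hu) (Set.mem_Ici.2 hv)
    (div_nonneg ha hM0.le) (div_nonneg hb hM0.le) hsum
  simp only [smul_eq_mul] at h
  have h2 := mul_le_mul_of_nonneg_left h hM0.le
  have e1 : X / M = a/M * u + b/M * v := by
    rw [hX]; field_simp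
  rw [e1]
  calc a * Real.negMulLog u + b * Real.negMulLog v
      = M * (a/M * Real.negMulLog u + b/M * Real.negMulLog v) := by
        field_simp
    _ ≤ M * Real.negMulLog (a/M * u + b/M * v) := h2

lemma condD_of_ne {n : ℕ} (σ : (Fin (n+1) → Bool) → ℝ) (b : Bool)
    (h : (∑ x, σ (Fin.cons b x)) ≠ 0) (y : Fin n → Bool) :
    condD σ b y = σ (Fin.cons b y) / (∑ x, σ (Fin.cons b x)) := by
  unfold condD
  rw [if_neg h]

theorem aux_info (p : ℝ) (hp0 : 0 < p) (hp1 : p < 1/2) :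
    ∀ n : ℕ, ∀ μ : (Fin n → Bool) → ℝ, (∀ x, 0 ≤ μ x) → (∑ x, μ x = 1) →
    (n : ℝ) * Real.log 2 - ∑ y, Real.negMulLog (flipDist p μ y)
      ≤ (1-2*p)^2 * ((n : ℝ) * Real.log 2 - ∑ x, Real.negMulLog (μ x)) := by
  intro n
  induction n with
  | zero =>
    intro μ hμ0 hμ1
    have h1 : ∀ f : (Fin 0 → Bool) → ℝ, ∑ x, f x = f (fun i => i.elim0) :=
      fun f => Fintype.sum_subsingleton f _
    have hμd : μ (fun i => i.elim0) = 1 := by rw [← h1 μ]; exact hμ1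
    have hf : ∀ y, flipDist p μ y = 1 := by
      intro y
      show (∑ x : Fin 0 → Bool, μ x * ∏ i : Fin 0, (if y i = x i then 1-p else p)) = 1
      simp only [Finset.univ_eq_empty, Finset.prod_empty, mul_one]
      exact hμ1
    have e1 : ∑ y, Real.negMulLog (flipDist p μ y) = 0 := by
      rw [h1 (fun y => Real.negMulLog (flipDist p μ y)), hf _, Real.negMulLog_one]
    have e2 : ∑ x, Real.negMulLog (μ x) = 0 := by
      rw [h1 (fun x => Real.negMulLog (μ x)), hμd, Real.negMulLog_one]
    rw [e1, e2]
    norm_num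
  | succ n IH =>
    intro μ hμ0 hμ1
    have hp01 : (0:ℝ) ≤ p := hp0.le
    have hp11 : p ≤ 1 := by linarith
    have hνt0 : 0 ≤ ∑ x, μ (Fin.cons true x) := Finset.sum_nonneg fun x _ => hμ0 _
    have hνf0 : 0 ≤ ∑ x, μ (Fin.cons false x) := Finset.sum_nonneg fun x _ => hμ0 _
    have hνsum : (∑ x, μ (Fin.cons true x)) + (∑ x, μ (Fin.cons false x)) = 1 := by
      have h := sum_cons_decomp (fun x => μ x)
      rw [hμ1, Fintype.sum_bool] at h
      linarith
    have hflip0 : ∀ y, 0 ≤ flipDist p μ y := flipDist_nonneg hp01 hp11 hμ0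
    -- chain rule for μ
    have chainA : ∑ x, Real.negMulLog (μ x)
        = (Real.negMulLog (∑ x, μ (Fin.cons true x))
            + Real.negMulLog (∑ x, μ (Fin.cons false x)))
          + ((∑ x, μ (Fin.cons true x)) * ∑ x, Real.negMulLog (condD μ true x)
            + (∑ x, μ (Fin.cons false x)) * ∑ x, Real.negMulLog (condD μ false x)) := by
      have h := chain_rule μ hμ0
      rwa [Fintype.sum_bool, Fintype.sum_bool] at h
    -- marginals of the flipped distribution
    have hmt : (∑ y, flipDist p μ (Fin.cons true y))
        = (∑ x, μ (Fin.cons true x)) * (1-p) + (∑ x, μ (Fin.cons false x)) * p := by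
      rw [flip_marg p μ hμ0 true, Fintype.sum_bool]
      norm_num
    have hmf : (∑ y, flipDist p μ (Fin.cons false y))
        = (∑ x, μ (Fin.cons true x)) * p + (∑ x, μ (Fin.cons false x)) * (1-p) := by
      rw [flip_marg p μ hμ0 false, Fintype.sum_bool]
      norm_num
    have hMt0 : 0 < (∑ x, μ (Fin.cons true x)) * (1-p) + (∑ x, μ (Fin.cons false x)) * p := by
      nlinarith
    have hMf0 : 0 < (∑ x, μ (Fin.cons true x)) * p + (∑ x, μ (Fin.cons false x)) * (1-p) := by
      nlinarith
    -- chain rule for flipped distribution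
    have chainB : ∑ y, Real.negMulLog (flipDist p μ y)
        = (Real.negMulLog ((∑ x, μ (Fin.cons true x)) * (1-p)
              + (∑ x, μ (Fin.cons false x)) * p)
            + Real.negMulLog ((∑ x, μ (Fin.cons true x)) * p
              + (∑ x, μ (Fin.cons false x)) * (1-p)))
          + (((∑ x, μ (Fin.cons true x)) * (1-p) + (∑ x, μ (Fin.cons false x)) * p)
              * ∑ y, Real.negMulLog (condD (flipDist p μ) true y)
            + ((∑ x, μ (Fin.cons true x)) * p + (∑ x, μ (Fin.cons false x)) * (1-p))
              * ∑ y, Real.negMulLog (condD (flipDist p μ) false y)) := by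
      have h := chain_rule (flipDist p μ) hflip0
      rwa [Fintype.sum_bool, Fintype.sum_bool, hmt, hmf] at h
    -- decomposition of the flipped distribution along the first output bit
    have flipdec : ∀ (b : Bool) (y : Fin n → Bool),
        flipDist p μ (Fin.cons b y)
          = ((∑ x, μ (Fin.cons true x)) * (if b = true then 1-p else p))
              * flipDist p (condD μ true) y
            + ((∑ x, μ (Fin.cons false x)) * (if b = false then 1-p else p))
              * flipDist p (condD μ false) y := by
      intro b y
      rw [flip_cons p μ hμ0 b y, Fintype.sum_bool]
    -- concavity step, for each output bit value
    have conc : ∀ (b : Bool) (M : ℝ),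
        M = (∑ x, μ (Fin.cons true x)) * (if b = true then 1-p else p)
          + (∑ x, μ (Fin.cons false x)) * (if b = false then 1-p else p) →
        0 < M →
        ((∑ x, μ (Fin.cons true x)) * (if b = true then 1-p else p))
            * ∑ y, Real.negMulLog (flipDist p (condD μ true) y)
          + ((∑ x, μ (Fin.cons false x)) * (if b = false then 1-p else p))
            * ∑ y, Real.negMulLog (flipDist p (condD μ false) y)
        ≤ M * ∑ y, Real.negMulLog (condD (flipDist p μ) b y) := by
      intro b M hMdef hM0
      have hMsum : (∑ x, flipDist p μ (Fin.cons b x)) = M := by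
        rw [flip_marg p μ hμ0 b, Fintype.sum_bool, hMdef]
      have hqy : ∀ y, condD (flipDist p μ) b y = flipDist p μ (Fin.cons b y) / M := by
        intro y
        rw [condD_of_ne (flipDist p μ) b (by rw [hMsum]; exact hM0.ne') y, hMsum]
      have hwp : (0:ℝ) ≤ (if b = true then 1-p else p) := by split <;> linarith
      have hwq : (0:ℝ) ≤ (if b = false then 1-p else p) := by split <;> linarith
      have key : ∀ y : Fin n → Bool,
          ((∑ x, μ (Fin.cons true x)) * (if b = true then 1-p else p))
              * Real.negMulLog (flipDist p (condD μ true) y)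
            + ((∑ x, μ (Fin.cons false x)) * (if b = false then 1-p else p))
              * Real.negMulLog (flipDist p (condD μ false) y)
          ≤ M * Real.negMulLog (condD (flipDist p μ) b y) := by
        intro y
        rw [hqy y]
        exact conc2 (mul_nonneg hνt0 hwp) (mul_nonneg hνf0 hwq) hMdef hM0
          (flipDist_nonneg hp01 hp11 (condD_nonneg hμ0 true) y)
          (flipDist_nonneg hp01 hp11 (condD_nonneg hμ0 false) y)
          (flipdec b y)
      calc ((∑ x, μ (Fin.cons true x)) * (if b = true then 1-p else p))
              * ∑ y, Real.negMulLog (flipDist p (condD μ true) y)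
            + ((∑ x, μ (Fin.cons false x)) * (if b = false then 1-p else p))
              * ∑ y, Real.negMulLog (flipDist p (condD μ false) y)
          = ∑ y : Fin n → Bool,
              (((∑ x, μ (Fin.cons true x)) * (if b = true then 1-p else p))
                * Real.negMulLog (flipDist p (condD μ true) y)
              + ((∑ x, μ (Fin.cons false x)) * (if b = false then 1-p else p))
                * Real.negMulLog (flipDist p (condD μ false) y)) := by
            rw [Finset.sum_add_distrib, ← Finset.mul_sum, ← Finset.mul_sum]
        _ ≤ ∑ y : Fin n → Bool, M * Real.negMulLog (condD (flipDist p μ) b y) :=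
            Finset.sum_le_sum (fun y _ => key y)
        _ = M * ∑ y, Real.negMulLog (condD (flipDist p μ) b y) := by
            rw [Finset.mul_sum]
    have conc_t := conc true _ rfl (by simpa using hMt0)
    have conc_f := conc false _ rfl (by simpa using hMf0)
    simp only [if_pos rfl] at conc_t conc_f
    norm_num at conc_t conc_f
    -- induction hypothesis applied to the two conditionals
    have IH_t := IH (condD μ true) (condD_nonneg hμ0 true) (condD_sum true)
    have IH_f := IH (condD μ false) (condD_nonneg hμ0 false) (condD_sum false)
    have P1 := mul_le_mul_of_nonneg_left IH_t hνt0
    have P2 := mul_le_mul_of_nonneg_left IH_f hνf0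
    -- binary entropy step
    have hνt1 : (∑ x, μ (Fin.cons true x)) ≤ 1 := by linarith
    have hbin := binEnt_lemma hp0 hp1 hνt0 hνt1
    have hElν : El (∑ x, μ (Fin.cons true x))
        = -(Real.negMulLog (∑ x, μ (Fin.cons true x)))
          - Real.negMulLog (∑ x, μ (Fin.cons false x)) := by
      rw [show (∑ x, μ (Fin.cons false x)) = 1 - (∑ x, μ (Fin.cons true x)) by linarith]
      simp only [El, Real.negMulLog]
      ring
    have hElM : El (p + (1-2*p) * ∑ x, μ (Fin.cons true x))
        = -(Real.negMulLog ((∑ x, μ (Fin.cons true x)) * (1-p)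
              + (∑ x, μ (Fin.cons false x)) * p))
          - Real.negMulLog ((∑ x, μ (Fin.cons true x)) * p
              + (∑ x, μ (Fin.cons false x)) * (1-p)) := by
      rw [show (∑ x, μ (Fin.cons true x)) * (1-p) + (∑ x, μ (Fin.cons false x)) * p
            = p + (1-2*p) * ∑ x, μ (Fin.cons true x) by linear_combination p * hνsum,
          show (∑ x, μ (Fin.cons true x)) * p + (∑ x, μ (Fin.cons false x)) * (1-p)
            = 1 - (p + (1-2*p) * ∑ x, μ (Fin.cons true x)) by linear_combination (1-p) * hνsum]
      simp only [El, Real.negMulLog]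
      ring
    have binE' : Real.log 2
          - (Real.negMulLog ((∑ x, μ (Fin.cons true x)) * (1-p)
                + (∑ x, μ (Fin.cons false x)) * p)
             + Real.negMulLog ((∑ x, μ (Fin.cons true x)) * p
                + (∑ x, μ (Fin.cons false x)) * (1-p)))
        ≤ (1-2*p)^2 * (Real.log 2
            - (Real.negMulLog (∑ x, μ (Fin.cons true x))
               + Real.negMulLog (∑ x, μ (Fin.cons false x)))) := by
      have h2 : (1-2*p)^2 * (Real.log 2 + El (∑ x, μ (Fin.cons true x)))
          = (1-2*p)^2 * (Real.log 2
              - (Real.negMulLog (∑ x, μ (Fin.cons true x))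
                 + Real.negMulLog (∑ x, μ (Fin.cons false x)))) := by
        rw [hElν]; ring
      rw [hElν, hElM] at hbin
      linarith
    -- bookkeeping for n·L terms
    have hnl : (∑ x, μ (Fin.cons true x)) * ((n:ℝ) * Real.log 2)
        + (∑ x, μ (Fin.cons false x)) * ((n:ℝ) * Real.log 2) = (n:ℝ) * Real.log 2 := by
      linear_combination ((n:ℝ) * Real.log 2) * hνsum
    have hnl2 := congrArg (fun z => (1-2*p)^2 * z) hnl
    have chainA' := congrArg (fun z => (1-2*p)^2 * z) chainA
    -- final assembly
    push_cast
    set_option maxHeartbeats 1000000 in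
    linarith [chainB, chainA', binE', conc_t, conc_f, P1, P2, hnl, hnl2]

lemma shannonEnt_eq {α : Type*} [Fintype α] (μ : α → ℝ) :
    shannonEnt μ = (∑ x, Real.negMulLog (μ x)) / Real.log 2 := by
  unfold shannonEnt
  rw [Finset.sum_div]
  apply Finset.sum_congr rfl
  intro x _
  rw [Real.negMulLog, Real.logb]
  ring

/-- Let `X` be a random string of `n` bits with distribution `μ`, and let `Y` be obtained
from `X` by flipping each bit independently with probability `p`, `0 < p < 1/2`.
Then `I(Y) ≤ (1−2p)²·I(X)`, where `I(Z) = n − H(Z)`. -/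
theorem info_flip_string_le {n : ℕ} (p : ℝ) (hp0 : 0 < p) (hp1 : p < 1 / 2)
    (μ : (Fin n → Bool) → ℝ) (hμ0 : ∀ x, 0 ≤ μ x) (hμ1 : ∑ x, μ x = 1) :
    (n : ℝ) - shannonEnt (flipDist p μ) ≤ (1 - 2 * p) ^ 2 * ((n : ℝ) - shannonEnt μ) := by
  have hL : (0:ℝ) < Real.log 2 := Real.log_pos (by norm_num)
  have h := aux_info p hp0 hp1 n μ hμ0 hμ1
  rw [shannonEnt_eq, shannonEnt_eq]
  rw [show (n:ℝ) = ((n:ℝ) * Real.log 2)/Real.log 2 by field_simp]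
  rw [← sub_div, ← sub_div, ← mul_div_assoc]
  rw [div_le_div_iff₀ hL hL]
  apply mul_le_mul_of_nonneg_right _ hL.le
  convert h using 2 <;> ring

end Aux
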